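/- arXiv:1410.2444 — 3 statements merged into one kernel-verified Lean document; each statement's English description precedes it below -/
import Mathlib

section
/- Let Ω ⊂ ℝ^n be a uniform domain. Then for each α ∈ (0,1) there exists a finite constant C > 0, depending only on α and Ω, such that for every continuously differentiable function u : Ω → ℝ one has sup_{x,y∈Ω, x≠y} |u(x)−u(y)|/|x−y|^α ≤ C · sup_{x∈Ω} ( dist(x,∂Ω)^{1−α} |∇u(x)| ). -/
open MeasureTheory Metric Set Filter
open scoped ENNReal NNReal Topology

noncomputable section

abbrev En (n : ℕ) : Type := EuclideanSpace ℝ (Fin n)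

/-- Ω is a uniform domain: any two points x, y ∈ Ω can be joined by a rectifiable curve
in Ω of length ≤ c|x−y| such that at every point z of the curve the shorter of the two
subarcs (from x to z and from z to y) has length at most c·dist(z,∂Ω). -/
lemma key_ineq {α p q : ℝ} (hα0 : 0 < α) (hα1 : α < 1) (hp : 0 ≤ p) (hpq : p ≤ q) :
    q ^ (α - 1) * (q - p) ≤ (1/α) * (q ^ α - p ^ α) := by
  rcases eq_or_lt_of_le (hp.trans hpq) with hq | hq0
  · have hp0 : p = 0 := le_antisymm (hq ▸ hpq) hp
    rw [← hq, hp0]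
    simp [Real.zero_rpow (by linarith : α - 1 ≠ 0), Real.zero_rpow hα0.ne']
  · have h1 : (p/q) ^ α * (1:ℝ) ^ (1-α) ≤ α * (p/q) + (1-α) * 1 :=
      Real.geom_mean_le_arith_mean2_weighted hα0.le (by linarith)
        (div_nonneg hp hq0.le) zero_le_one (by ring)
    have h2 : (p/q) ^ α ≤ α * (p/q) + (1-α) := by simpa using h1
    have hpα : p ^ α = (p/q) ^ α * q ^ α := by
      rw [← Real.mul_rpow (div_nonneg hp hq0.le) hq0.le, div_mul_cancel₀ _ hq0.ne']
    have hq1 : q ^ (α - 1) = q ^ α / q := by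
      rw [Real.rpow_sub hq0, Real.rpow_one]
    have hqα : (0:ℝ) ≤ q ^ α := Real.rpow_nonneg hq0.le _
    have h3 : p ^ α ≤ (α * (p/q) + (1-α)) * q ^ α :=
      hpα ▸ mul_le_mul_of_nonneg_right h2 hqα
    have h3' : p ^ α * q ≤ α * p * q ^ α + (1 - α) * (q ^ α * q) := by
      calc p ^ α * q ≤ (α * (p / q) + (1 - α)) * q ^ α * q :=
            mul_le_mul_of_nonneg_right h3 hq0.le
        _ = α * p * q ^ α + (1 - α) * (q ^ α * q) := by field_simp
    rw [hq1, div_mul_eq_mul_div, div_le_iff₀ hq0,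
      show (1:ℝ)/α * (q ^ α - p ^ α) * q = ((q ^ α - p ^ α) * q) / α by ring,
      le_div_iff₀ hα0]
    nlinarith [h3']

lemma ball_infDist_subset {n : ℕ} {Ω : Set (En n)} (hop : IsOpen Ω) {z : En n} (hz : z ∈ Ω) :
    ball z (infDist z (frontier Ω)) ⊆ Ω := by
  rcases eq_empty_or_nonempty (frontier Ω) with h | h
  · simp [h, infDist_empty, ball_zero]
  · set r := infDist z (frontier Ω) with hr
    have hzf : z ∉ frontier Ω := by
      intro hzf; rw [hop.frontier_eq] at hzf; exact hzf.2 hz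
    have hrpos : 0 < r := (isClosed_frontier.notMem_iff_infDist_pos h).1 hzf
    have hdecomp : ball z r ⊆ interior Ω ∪ interior Ωᶜ := by
      intro w hw
      have hwf : w ∈ (frontier Ω)ᶜ := by
        intro hwf
        have : r ≤ dist z w := infDist_le_dist_of_mem hwf
        rw [mem_ball, dist_comm] at hw
        linarith
      rw [frontier_eq_closure_inter_closure, compl_inter] at hwf
      rcases hwf with h' | h'
      · right; rwa [interior_compl]
      · left; rw [← interior_compl, compl_compl] at h'; exact h'
    have hdisj : Disjoint (interior Ω) (interior Ωᶜ) :=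
      (disjoint_compl_right (a := Ω)).mono interior_subset interior_subset
    have hzint : z ∈ interior Ω := by rw [hop.interior_eq]; exact hz
    have := (convex_ball z r).isPreconnected.subset_left_of_subset_union
      isOpen_interior isOpen_interior hdisj hdecomp ⟨z, mem_ball_self hrpos, hzint⟩
    exact this.trans interior_subset

lemma infDist_pos_of_mem {n : ℕ} {Ω : Set (En n)} (hop : IsOpen Ω)
    (hfr : (frontier Ω).Nonempty) {z : En n} (hz : z ∈ Ω) :
    0 < infDist z (frontier Ω) := by
  apply (isClosed_frontier.notMem_iff_infDist_pos hfr).1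
  intro hzf
  rw [hop.frontier_eq] at hzf
  exact hzf.2 hz

lemma fwd_est {n : ℕ} {Ω : Set (En n)} (hop : IsOpen Ω) (hfr : (frontier Ω).Nonempty)
    {α : ℝ} (hα0 : 0 < α) (hα1 : α < 1)
    {u : En n → ℝ} (hu : ContDiffOn ℝ 1 u Ω)
    {K : ℝ} (hK : ∀ z ∈ Ω, infDist z (frontier Ω) ^ (1 - α) * ‖fderivWithin ℝ u Ω z‖ ≤ K)
    (hK0 : 0 ≤ K) {c : ℝ} (hc : 0 < c)
    {γ : ℝ → En n} {a b : ℝ} (hab : a ≤ b)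
    (hγc : ContinuousOn γ (Icc a b)) (hγΩ : ∀ t ∈ Icc a b, γ t ∈ Ω)
    (hyp : ∀ t ∈ Icc a b,
      eVariationOn γ (Icc a t) ≤ ENNReal.ofReal (c * infDist (γ t) (frontier Ω))) :
    |u (γ b) - u (γ a)| ≤
      (2*c) ^ (1-α) / α * K * ((eVariationOn γ (Icc a b)).toReal) ^ α := by
  set d : En n → ℝ := fun z => infDist z (frontier Ω) with hd
  have dpos : ∀ t ∈ Icc a b, 0 < d (γ t) := fun t ht =>
    infDist_pos_of_mem hop hfr (hγΩ t ht)
  have hne : (Icc a b).Nonempty := ⟨a, le_refl a, hab⟩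
  have hcomp : IsCompact (γ '' Icc a b) := isCompact_Icc.image_of_continuousOn hγc
  obtain ⟨z₀, hz₀mem, hz₀min⟩ := hcomp.exists_isMinOn (hne.image γ)
    ((continuous_infDist_pt (frontier Ω)).continuousOn)
  obtain ⟨t₀, ht₀, hz₀⟩ := hz₀mem
  set δ₀ : ℝ := d z₀ with hδ₀
  have δ₀pos : 0 < δ₀ := by rw [hδ₀, ← hz₀]; exact dpos t₀ ht₀
  have hδ : ∀ t ∈ Icc a b, δ₀ ≤ d (γ t) := fun t ht =>
    hz₀min (mem_image_of_mem γ ht)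
  have hunif := isCompact_Icc.uniformContinuousOn_of_continuous hγc
  rw [Metric.uniformContinuousOn_iff] at hunif
  obtain ⟨η, hη, hηs⟩ := hunif (δ₀/2) (by linarith)
  obtain ⟨m, hm⟩ := exists_nat_gt ((b - a)/η)
  have hm0 : 0 < (m:ℝ) := lt_of_le_of_lt (div_nonneg (by linarith) hη.le) hm
  have hmesh : (b - a)/m < η := by
    rw [div_lt_iff₀ hm0]
    calc b - a = ((b-a)/η) * η := by field_simp
      _ < m * η := mul_lt_mul_of_pos_right hm hη
      _ = η * m := mul_comm _ _
  set τ : ℕ → ℝ := fun i => a + i * ((b - a)/m) with hτ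
  have hτ0 : τ 0 = a := by simp [hτ]
  have hτm : τ m = b := by
    simp only [hτ]
    field_simp
    ring
  have hτmono : ∀ i j : ℕ, i ≤ j → τ i ≤ τ j := by
    intro i j hij
    have h1 : (i:ℝ) ≤ j := Nat.cast_le.2 hij
    have hstep : 0 ≤ (b - a)/m := div_nonneg (by linarith) hm0.le
    simp only [hτ]
    nlinarith
  have hτmem : ∀ i ≤ m, τ i ∈ Icc a b := by
    intro i hi
    exact ⟨by rw [← hτ0]; exact hτmono 0 i (Nat.zero_le _),
           by rw [← hτm]; exact hτmono i m hi⟩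
  have hfin : ∀ t ∈ Icc a b, eVariationOn γ (Icc a t) ≠ ⊤ := fun t ht =>
    ((hyp t ht).trans_lt ENNReal.ofReal_lt_top).ne
  set v : ℕ → ℝ := fun i => (eVariationOn γ (Icc a (τ i))).toReal with hv
  have hv0 : v 0 = 0 := by
    simp only [hv, hτ0]
    rw [Set.Icc_self, eVariationOn.subsingleton γ subsingleton_singleton]
    simp
  have hvnonneg : ∀ i, 0 ≤ v i := fun i => ENNReal.toReal_nonneg
  have hvmono : ∀ i j, i ≤ j → j ≤ m → v i ≤ v j := by
    intro i j hij hj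
    apply ENNReal.toReal_mono (hfin _ (hτmem j hj))
    exact eVariationOn.mono γ (Icc_subset_Icc le_rfl (hτmono i j hij))
  set B : ℝ := (2*c) ^ (1-α) / α with hB
  have key : ∀ i < m, |u (γ (τ (i+1))) - u (γ (τ i))| ≤ B * K * (v (i+1) ^ α - v i ^ α) := by
    intro i hi
    have hi1 : i + 1 ≤ m := hi
    have hsmem : τ i ∈ Icc a b := hτmem i (le_of_lt hi)
    have htmem : τ (i+1) ∈ Icc a b := hτmem (i+1) hi1
    have hst : τ i ≤ τ (i+1) := hτmono i (i+1) (Nat.le_succ _)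
    have hdistτ : dist (τ i) (τ (i+1)) < η := by
      rw [Real.dist_eq, abs_sub_comm, abs_of_nonneg (by linarith)]
      simp only [hτ]
      have hcast : (↑(i+1) : ℝ) = (i:ℝ) + 1 := by push_cast; ring
      rw [hcast]
      calc a + ((i:ℝ)+1) * ((b-a)/m) - (a + i * ((b-a)/m)) = (b-a)/m := by ring
        _ < η := hmesh
    have hclose : dist (γ (τ i)) (γ (τ (i+1))) < δ₀/2 := hηs _ hsmem _ htmem hdistτ
    set z := γ (τ (i+1)) with hz
    set ρ : ℝ := d z / 2 with hρ
    have hzΩ : z ∈ Ω := hγΩ _ htmem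
    have hdz : 0 < d z := dpos _ htmem
    have hρpos : 0 < ρ := by rw [hρ]; linarith
    have hρδ : δ₀/2 ≤ ρ := by
      have := hδ _ htmem
      rw [hρ]; linarith
    have hballΩ : ball z ρ ⊆ Ω := by
      refine (ball_subset_ball ?_).trans (ball_infDist_subset hop hzΩ)
      rw [hρ]; simp only [hd]; linarith
    have hgrad : ∀ w ∈ ball z ρ, ‖fderivWithin ℝ u (ball z ρ) w‖ ≤ K * ρ ^ (α - 1) := by
      intro w hw
      have hwΩ : w ∈ Ω := hballΩ hw
      have hdw : ρ ≤ d w := by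
        have h1 : d z ≤ d w + dist z w := infDist_le_infDist_add_dist
        rw [mem_ball, dist_comm] at hw
        rw [hρ] at *
        linarith
      have heq : fderivWithin ℝ u (ball z ρ) w = fderivWithin ℝ u Ω w := by
        rw [fderivWithin_of_isOpen isOpen_ball hw, fderivWithin_of_isOpen hop hwΩ]
      rw [heq]
      have hKw := hK w hwΩ
      have hρw : ρ ^ (1-α) ≤ d w ^ (1-α) :=
        Real.rpow_le_rpow hρpos.le hdw (by linarith)
      have hρ1α : 0 < ρ ^ (1-α) := Real.rpow_pos_of_pos hρpos _
      have h2 : ρ ^ (1-α) * ‖fderivWithin ℝ u Ω w‖ ≤ K :=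
        le_trans (mul_le_mul_of_nonneg_right hρw (norm_nonneg _)) hKw
      have h3 : ‖fderivWithin ℝ u Ω w‖ ≤ K / ρ ^ (1-α) := by
        rw [le_div_iff₀ hρ1α]; linarith [h2]
      rw [show α - 1 = -(1-α) by ring, Real.rpow_neg hρpos.le, ← div_eq_mul_inv]
      exact h3
    have hdiff : DifferentiableOn ℝ u (ball z ρ) :=
      (hu.differentiableOn one_ne_zero).mono hballΩ
    have hsball : γ (τ i) ∈ ball z ρ := by
      rw [mem_ball]
      exact lt_of_lt_of_le hclose hρδ
    have hlip := Convex.norm_image_sub_le_of_norm_fderivWithin_le hdiff hgrad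
      (convex_ball z ρ) (mem_ball_self hρpos) hsball
    -- distance bounded by variation increment
    have hadd := eVariationOn.Icc_add_Icc γ (s := Icc a (τ (i+1)))
      hsmem.1 hst ⟨hsmem.1, hst⟩
    have e1 : Icc a (τ (i+1)) ∩ Icc a (τ i) = Icc a (τ i) := by
      rw [Set.Icc_inter_Icc, max_self, min_eq_right hst]
    have e2 : Icc a (τ (i+1)) ∩ Icc (τ i) (τ (i+1)) = Icc (τ i) (τ (i+1)) := by
      rw [Set.Icc_inter_Icc, min_self, max_eq_right hsmem.1]
    have e3 : Icc a (τ (i+1)) ∩ Icc a (τ (i+1)) = Icc a (τ (i+1)) := inter_self _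
    rw [e1, e2, e3] at hadd
    have hfin1 : eVariationOn γ (Icc a (τ (i+1))) ≠ ⊤ := hfin _ htmem
    have hfinp : eVariationOn γ (Icc (τ i) (τ (i+1))) ≠ ⊤ := by
      refine ne_top_of_le_ne_top hfin1 ?_
      rw [← hadd]; exact le_add_self
    have hfin0 : eVariationOn γ (Icc a (τ i)) ≠ ⊤ := hfin _ hsmem
    have hsplit : v (i+1) - v i = (eVariationOn γ (Icc (τ i) (τ (i+1)))).toReal := by
      simp only [hv]
      rw [← hadd, ENNReal.toReal_add hfin0 hfinp]
      ring
    have hvar : dist (γ (τ i)) (γ (τ (i+1))) ≤ v (i+1) - v i := by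
      rw [hsplit, dist_edist]
      exact ENNReal.toReal_mono hfinp
        (eVariationOn.edist_le γ ⟨le_rfl, hst⟩ ⟨hst, le_rfl⟩)
    have hvinc : 0 ≤ v (i+1) - v i := by
      have := hvmono i (i+1) (Nat.le_succ _) hi1; linarith
    have hstep1 : |u (γ (τ (i+1))) - u (γ (τ i))| ≤ K * ρ ^ (α-1) * (v (i+1) - v i) := by
      have h4 : ‖u (γ (τ i)) - u z‖ ≤ K * ρ ^ (α-1) * ‖γ (τ i) - z‖ := hlip
      rw [Real.norm_eq_abs, abs_sub_comm, ← dist_eq_norm] at h4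
      calc |u (γ (τ (i+1))) - u (γ (τ i))| = |u z - u (γ (τ i))| := by rw [hz]
        _ ≤ K * ρ ^ (α-1) * dist (γ (τ i)) z := h4
        _ ≤ K * ρ ^ (α-1) * (v (i+1) - v i) := by
            apply mul_le_mul_of_nonneg_left _ (by positivity)
            exact hvar
    rcases eq_or_lt_of_le (hvnonneg (i+1)) with h0 | hposv
    · have hvi : v i = 0 :=
        le_antisymm (h0 ▸ hvmono i (i+1) (Nat.le_succ _) hi1) (hvnonneg i)
      calc |u (γ (τ (i+1))) - u (γ (τ i))| ≤ K * ρ ^ (α-1) * (v (i+1) - v i) := hstep1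
        _ = 0 := by rw [← h0, hvi]; ring
        _ ≤ B * K * (v (i+1) ^ α - v i ^ α) := by rw [← h0, hvi]; simp
    · have hρv : v (i+1) / (2*c) ≤ ρ := by
        have h := hyp _ htmem
        have hvc : v (i+1) ≤ c * d z := by
          simp only [hv]
          calc (eVariationOn γ (Icc a (τ (i+1)))).toReal
              ≤ (ENNReal.ofReal (c * infDist (γ (τ (i+1))) (frontier Ω))).toReal :=
                ENNReal.toReal_mono ENNReal.ofReal_ne_top h
            _ = c * d z := by
                rw [ENNReal.toReal_ofReal (by positivity)]
        rw [div_le_iff₀ (by linarith), hρ]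
        linarith
      have hρneg : ρ ^ (α-1) ≤ (v (i+1)/(2*c)) ^ (α-1) :=
        Real.rpow_le_rpow_of_nonpos (by positivity) hρv (by linarith)
      have hrw : (v (i+1)/(2*c)) ^ (α-1) = (2*c) ^ (1-α) * v (i+1) ^ (α-1) := by
        rw [Real.div_rpow (hvnonneg _) (by positivity : (0:ℝ) ≤ 2*c),
          show (α-1:ℝ) = -(1-α) by ring, Real.rpow_neg (by positivity : (0:ℝ) ≤ 2*c),
          div_eq_mul_inv, inv_inv, mul_comm]
      have hkey := key_ineq hα0 hα1 (hvnonneg i) (hvmono i (i+1) (Nat.le_succ _) hi1)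
      have hKc : 0 ≤ K * (2*c) ^ (1-α) :=
        mul_nonneg hK0 (Real.rpow_nonneg (by positivity) _)
      calc |u (γ (τ (i+1))) - u (γ (τ i))| ≤ K * ρ ^ (α-1) * (v (i+1) - v i) := hstep1
        _ ≤ K * ((2*c) ^ (1-α) * v (i+1) ^ (α-1)) * (v (i+1) - v i) := by
            apply mul_le_mul_of_nonneg_right _ hvinc
            exact mul_le_mul_of_nonneg_left (hρneg.trans_eq hrw) hK0
        _ = K * (2*c) ^ (1-α) * (v (i+1) ^ (α-1) * (v (i+1) - v i)) := by ring
        _ ≤ K * (2*c) ^ (1-α) * ((1/α) * (v (i+1) ^ α - v i ^ α)) :=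
            mul_le_mul_of_nonneg_left hkey hKc
        _ = B * K * (v (i+1) ^ α - v i ^ α) := by rw [hB]; ring
  have htri : |u (γ b) - u (γ a)| ≤
      ∑ i ∈ Finset.range m, |u (γ (τ (i+1))) - u (γ (τ i))| := by
    have h := dist_le_range_sum_dist (fun i => u (γ (τ i))) m
    simp only [Real.dist_eq] at h
    calc |u (γ b) - u (γ a)| = |u (γ (τ 0)) - u (γ (τ m))| := by
          rw [hτ0, hτm, abs_sub_comm]
      _ ≤ ∑ i ∈ Finset.range m, |u (γ (τ i)) - u (γ (τ (i+1)))| := h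
      _ = ∑ i ∈ Finset.range m, |u (γ (τ (i+1))) - u (γ (τ i))| := by
          apply Finset.sum_congr rfl
          intro i _
          rw [abs_sub_comm]
  calc |u (γ b) - u (γ a)|
      ≤ ∑ i ∈ Finset.range m, |u (γ (τ (i+1))) - u (γ (τ i))| := htri
    _ ≤ ∑ i ∈ Finset.range m, B * K * (v (i+1) ^ α - v i ^ α) :=
        Finset.sum_le_sum (fun i hi => key i (Finset.mem_range.1 hi))
    _ = B * K * ∑ i ∈ Finset.range m, (v (i+1) ^ α - v i ^ α) := by
        rw [Finset.mul_sum]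
    _ = B * K * (v m ^ α - v 0 ^ α) := by
        rw [Finset.sum_range_sub (fun i => v i ^ α)]
    _ = B * K * (v m) ^ α := by rw [hv0, Real.zero_rpow hα0.ne']; ring
    _ = (2*c) ^ (1-α) / α * K * ((eVariationOn γ (Icc a b)).toReal) ^ α := by
        rw [hB]; simp only [hv, hτm]

lemma bwd_est {n : ℕ} {Ω : Set (En n)} (hop : IsOpen Ω) (hfr : (frontier Ω).Nonempty)
    {α : ℝ} (hα0 : 0 < α) (hα1 : α < 1)
    {u : En n → ℝ} (hu : ContDiffOn ℝ 1 u Ω)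
    {K : ℝ} (hK : ∀ z ∈ Ω, infDist z (frontier Ω) ^ (1 - α) * ‖fderivWithin ℝ u Ω z‖ ≤ K)
    (hK0 : 0 ≤ K) {c : ℝ} (hc : 0 < c)
    {γ : ℝ → En n} {a b : ℝ} (hab : a ≤ b)
    (hγc : ContinuousOn γ (Icc a b)) (hγΩ : ∀ t ∈ Icc a b, γ t ∈ Ω)
    (hyp : ∀ t ∈ Icc a b,
      eVariationOn γ (Icc t b) ≤ ENNReal.ofReal (c * infDist (γ t) (frontier Ω))) :
    |u (γ b) - u (γ a)| ≤
      (2*c) ^ (1-α) / α * K * ((eVariationOn γ (Icc a b)).toReal) ^ α := by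
  set φ : ℝ → ℝ := fun s => a + b - s with hφ
  have hφmem : ∀ s ∈ Icc a b, φ s ∈ Icc a b := by
    intro s hs
    exact ⟨by simp only [hφ]; linarith [hs.2], by simp only [hφ]; linarith [hs.1]⟩
  have hφcont : ContinuousOn φ (Icc a b) :=
    (continuous_const.sub continuous_id).continuousOn
  have hanti : ∀ t : ℝ, AntitoneOn φ (Icc a t) := by
    intro t s _ r _ hsr
    simp only [hφ]; linarith
  have himg : ∀ t : ℝ, φ '' Icc a t = Icc (a + b - t) b := by
    intro t
    have h := image_const_sub_Icc (a + b) a t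
    rw [show φ = fun x => a + b - x from rfl, h]
    congr 1
    ring
  have hδvar : ∀ t : ℝ, eVariationOn (γ ∘ φ) (Icc a t) = eVariationOn γ (Icc (a + b - t) b) := by
    intro t
    rw [eVariationOn.comp_eq_of_antitoneOn γ φ (hanti t), himg t]
  have hres := fwd_est hop hfr hα0 hα1 hu hK hK0 hc (γ := γ ∘ φ) hab
    (ContinuousOn.comp hγc hφcont hφmem)
    (fun t ht => hγΩ _ (hφmem t ht))
    (by
      intro t ht
      rw [hδvar t]
      have : (γ ∘ φ) t = γ (a + b - t) := rfl
      rw [this]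
      exact hyp (a + b - t) (hφmem t ht))
  have hφb : (γ ∘ φ) b = γ a := by
    simp only [Function.comp, hφ, show a + b - b = a from by ring]
  have hφa : (γ ∘ φ) a = γ b := by
    simp only [Function.comp, hφ, show a + b - a = b from by ring]
  have hvareq : eVariationOn (γ ∘ φ) (Icc a b) = eVariationOn γ (Icc a b) := by
    rw [hδvar b, show a + b - b = a from by ring]
  rw [hφb, hφa, hvareq] at hres
  rwa [abs_sub_comm]

theorem holder_main
    (n : ℕ) (Ω : Set (En n))
    (hΩne : Ω.Nonempty) (hΩuniv : Ω ≠ Set.univ) (hop : IsOpen Ω)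
    (c : ℝ) (hc : 0 < c)
    (hcurve : ∀ x ∈ Ω, ∀ y ∈ Ω,
      ∃ γ : ℝ → En n, ContinuousOn γ (Set.Icc 0 1) ∧ γ 0 = x ∧ γ 1 = y ∧
        (∀ t ∈ Set.Icc (0 : ℝ) 1, γ t ∈ Ω) ∧
        eVariationOn γ (Set.Icc 0 1) ≤ ENNReal.ofReal (c * dist x y) ∧
        ∀ t ∈ Set.Icc (0 : ℝ) 1,
          min (eVariationOn γ (Set.Icc 0 t)) (eVariationOn γ (Set.Icc t 1)) ≤
            ENNReal.ofReal (c * Metric.infDist (γ t) (frontier Ω)))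
    (α : ℝ) (hα0 : 0 < α) (hα1 : α < 1) :
    ∃ C : ℝ, 0 < C ∧
      ∀ u : En n → ℝ, ContDiffOn ℝ 1 u Ω →
        ∀ K : ℝ, (∀ z ∈ Ω, Metric.infDist z (frontier Ω) ^ (1 - α) *
            ‖fderivWithin ℝ u Ω z‖ ≤ K) →
          ∀ x ∈ Ω, ∀ y ∈ Ω, |u x - u y| ≤ C * K * dist x y ^ α := by
  have hfr : (frontier Ω).Nonempty := nonempty_frontier_iff.2 ⟨hΩne, hΩuniv⟩
  set B : ℝ := (2*c) ^ (1-α) / α with hB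
  have hBpos : 0 < B := div_pos (Real.rpow_pos_of_pos (by linarith) _) hα0
  refine ⟨2 * B * c ^ α, by positivity, ?_⟩
  intro u hu K hK x hx y hy
  have hK0 : 0 ≤ K :=
    le_trans (mul_nonneg (Real.rpow_nonneg infDist_nonneg _) (norm_nonneg _)) (hK x hx)
  obtain ⟨γ, hγc, hγ0, hγ1, hγΩ, hlen, hcig⟩ := hcurve x hx y hy
  set L : ℝ := (eVariationOn γ (Icc 0 1)).toReal with hL
  have hfinL : eVariationOn γ (Icc 0 1) ≠ ⊤ := (hlen.trans_lt ENNReal.ofReal_lt_top).ne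
  have hL0 : 0 ≤ L := ENNReal.toReal_nonneg
  have hLle : L ≤ c * dist x y := by
    rw [hL]
    calc (eVariationOn γ (Icc 0 1)).toReal
        ≤ (ENNReal.ofReal (c * dist x y)).toReal := ENNReal.toReal_mono ENNReal.ofReal_ne_top hlen
      _ = c * dist x y := ENNReal.toReal_ofReal (by positivity)
  -- it suffices to prove the main bound in terms of L
  suffices hmain : |u x - u y| ≤ 2 * B * K * L ^ α by
    calc |u x - u y| ≤ 2 * B * K * L ^ α := hmain
      _ ≤ 2 * B * K * (c * dist x y) ^ α := by
          apply mul_le_mul_of_nonneg_left _ (by positivity)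
          exact Real.rpow_le_rpow hL0 hLle hα0.le
      _ = 2 * B * c ^ α * K * dist x y ^ α := by
          rw [Real.mul_rpow hc.le dist_nonneg]; ring
  -- finiteness of all partial variations
  have hsub1 : ∀ t ∈ Icc (0:ℝ) 1, eVariationOn γ (Icc 0 t) ≠ ⊤ := by
    intro t ht
    exact ne_top_of_le_ne_top hfinL (eVariationOn.mono γ (Icc_subset_Icc le_rfl ht.2))
  have hsub2 : ∀ t ∈ Icc (0:ℝ) 1, eVariationOn γ (Icc t 1) ≠ ⊤ := by
    intro t ht
    exact ne_top_of_le_ne_top hfinL (eVariationOn.mono γ (Icc_subset_Icc ht.1 le_rfl))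
  set Vr : ℝ → ℝ := fun t => (eVariationOn γ (Icc 0 t)).toReal with hVr
  set Wr : ℝ → ℝ := fun t => (eVariationOn γ (Icc t 1)).toReal with hWr
  have hadd : ∀ t ∈ Icc (0:ℝ) 1, Vr t + Wr t = L := by
    intro t ht
    have h := eVariationOn.Icc_add_Icc γ (s := Icc (0:ℝ) 1) ht.1 ht.2 ht
    have e1 : Icc (0:ℝ) 1 ∩ Icc 0 t = Icc 0 t := by
      rw [Set.Icc_inter_Icc, max_self, min_eq_right ht.2]
    have e2 : Icc (0:ℝ) 1 ∩ Icc t 1 = Icc t 1 := by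
      rw [Set.Icc_inter_Icc, min_self, max_eq_right ht.1]
    have e3 : Icc (0:ℝ) 1 ∩ Icc 0 1 = Icc (0:ℝ) 1 := inter_self _
    rw [e1, e2, e3] at h
    simp only [hVr, hWr, hL]
    rw [← h, ENNReal.toReal_add (hsub1 t ht) (hsub2 t ht)]
  have hVmono : ∀ s t : ℝ, s ≤ t → t ∈ Icc (0:ℝ) 1 → Vr s ≤ Vr t := by
    intro s t hst ht
    exact ENNReal.toReal_mono (hsub1 t ht) (eVariationOn.mono γ (Icc_subset_Icc le_rfl hst))
  have hVnonneg : ∀ t, 0 ≤ Vr t := fun t => ENNReal.toReal_nonneg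
  have hWnonneg : ∀ t, 0 ≤ Wr t := fun t => ENNReal.toReal_nonneg
  have hVr0 : Vr 0 = 0 := by
    simp only [hVr]
    rw [Set.Icc_self, eVariationOn.subsingleton γ subsingleton_singleton]
    simp
  -- the splitting point
  set S : Set ℝ := {t | t ∈ Icc (0:ℝ) 1 ∧ Vr t ≤ L/2} with hS
  have h0S : (0:ℝ) ∈ S := ⟨⟨le_refl 0, zero_le_one⟩, by rw [hVr0]; linarith⟩
  have hSne : S.Nonempty := ⟨0, h0S⟩
  have hSbdd : BddAbove S := ⟨1, fun t ht => ht.1.2⟩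
  set t₁ : ℝ := sSup S with ht₁
  have ht₁mem : t₁ ∈ Icc (0:ℝ) 1 :=
    ⟨le_csSup hSbdd h0S, csSup_le hSne (fun t ht => ht.1.2)⟩
  -- cigar consequences
  have hcigV : ∀ t ∈ Icc (0:ℝ) 1, Vr t ≤ L/2 →
      eVariationOn γ (Icc 0 t) ≤ ENNReal.ofReal (c * infDist (γ t) (frontier Ω)) := by
    intro t ht hVt
    have hVW : Vr t ≤ Wr t := by have := hadd t ht; linarith
    have hle : eVariationOn γ (Icc 0 t) ≤ eVariationOn γ (Icc t 1) :=
      (ENNReal.toReal_le_toReal (hsub1 t ht) (hsub2 t ht)).1 hVW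
    have := hcig t ht
    rwa [min_eq_left hle] at this
  have hcigW : ∀ t ∈ Icc (0:ℝ) 1, L/2 < Vr t →
      eVariationOn γ (Icc t 1) ≤ ENNReal.ofReal (c * infDist (γ t) (frontier Ω)) := by
    intro t ht hVt
    have hVW : Wr t ≤ Vr t := by have := hadd t ht; linarith
    have hle : eVariationOn γ (Icc t 1) ≤ eVariationOn γ (Icc 0 t) :=
      (ENNReal.toReal_le_toReal (hsub2 t ht) (hsub1 t ht)).1 hVW
    have := hcig t ht
    rwa [min_eq_right hle] at this
  -- general bound helper
  have hBK : 0 ≤ B * K := by positivity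
  have hboundL : ∀ X : ℝ, 0 ≤ X → X ≤ L → B * K * X ^ α ≤ B * K * L ^ α := by
    intro X hX hXL
    exact mul_le_mul_of_nonneg_left (Real.rpow_le_rpow hX hXL hα0.le) hBK
  -- forward piece: if Vr ≤ L/2 up to t', then |u (γ t') - u x| ≤ B K L^α
  have hfwd : ∀ t' ∈ Icc (0:ℝ) 1, (∀ s ∈ Icc (0:ℝ) t', Vr s ≤ L/2) →
      |u (γ t') - u x| ≤ B * K * L ^ α := by
    intro t' ht' hsmall
    have h := fwd_est hop hfr hα0 hα1 hu hK hK0 hc (γ := γ) ht'.1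
      (hγc.mono (Icc_subset_Icc le_rfl ht'.2))
      (fun s hs => hγΩ s ⟨hs.1, hs.2.trans ht'.2⟩)
      (fun s hs => hcigV s ⟨hs.1, hs.2.trans ht'.2⟩ (hsmall s hs))
    rw [hγ0] at h
    refine h.trans ?_
    rw [← hB]
    refine hboundL _ (hVnonneg t') ?_
    have := hadd t' ht'
    have := hWnonneg t'
    linarith
  -- backward piece: if Vr > L/2 from t' on, then |u y - u (γ t')| ≤ B K L^α
  have hbwd : ∀ t' ∈ Icc (0:ℝ) 1, (∀ s ∈ Icc t' 1, L/2 < Vr s) →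
      |u y - u (γ t')| ≤ B * K * L ^ α := by
    intro t' ht' hbig
    have h := bwd_est hop hfr hα0 hα1 hu hK hK0 hc (γ := γ) ht'.2
      (hγc.mono (Icc_subset_Icc ht'.1 le_rfl))
      (fun s hs => hγΩ s ⟨ht'.1.trans hs.1, hs.2⟩)
      (fun s hs => hcigW s ⟨ht'.1.trans hs.1, hs.2⟩ (hbig s hs))
    rw [hγ1] at h
    refine h.trans ?_
    rw [← hB]
    refine hboundL _ ENNReal.toReal_nonneg ?_
    have h1 := hadd t' ht'
    have h2 := hVnonneg t'
    simp only [hWr] at h1 ⊢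
    linarith
  -- continuity of u∘γ at t₁
  have huγ : ContinuousWithinAt (u ∘ γ) (Icc 0 1) t₁ := by
    have h1 : ContinuousAt u (γ t₁) :=
      hu.continuousOn.continuousAt (hop.mem_nhds (hγΩ t₁ ht₁mem))
    exact h1.comp_continuousWithinAt (hγc t₁ ht₁mem)
  rw [Metric.continuousWithinAt_iff] at huγ
  -- conclude via epsilon argument
  by_contra hcon
  push_neg at hcon
  set ε : ℝ := (|u x - u y| - 2 * B * K * L ^ α) / 2 with hε
  have hεpos : 0 < ε := by simp only [hε]; linarith
  obtain ⟨δ, hδpos, hδ⟩ := huγ ε hεpos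
  have hfinal : |u x - u y| ≤ 2 * B * K * L ^ α + ε := by
    rcases le_or_gt (Vr t₁) (L/2) with hcase | hcase
    · -- case (a)
      rcases eq_or_lt_of_le ht₁mem.2 with ht1 | ht1
      · -- t₁ = 1 : forward all the way
        have h := hfwd 1 ⟨zero_le_one, le_refl 1⟩ (fun s hs => by
          have : Vr s ≤ Vr t₁ := hVmono s t₁ (ht1 ▸ hs.2) ht₁mem
          linarith)
        rw [hγ1] at h
        rw [abs_sub_comm] at h
        linarith [mul_nonneg hBK (Real.rpow_nonneg hL0 α)]
      · -- t₁ < 1 : pick t' slightly to the right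
        set t' : ℝ := min 1 (t₁ + δ/2) with ht'
        have ht'mem : t' ∈ Icc (0:ℝ) 1 :=
          ⟨le_min (zero_le_one) (by linarith [ht₁mem.1]), min_le_left _ _⟩
        have ht't : t₁ < t' := lt_min ht1 (by linarith)
        have hdist : dist t' t₁ < δ := by
          rw [Real.dist_eq, abs_of_nonneg (by linarith)]
          have : t' ≤ t₁ + δ/2 := min_le_right _ _
          linarith
        have hmid : |u (γ t₁) - u (γ t')| < ε := by
          have := hδ ht'mem hdist
          rwa [Function.comp_apply, Function.comp_apply, Real.dist_eq, abs_sub_comm] at this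
        have h1 : |u (γ t₁) - u x| ≤ B * K * L ^ α :=
          hfwd t₁ ht₁mem (fun s hs => by
            have : Vr s ≤ Vr t₁ := hVmono s t₁ hs.2 ht₁mem
            linarith)
        have h3 : |u y - u (γ t')| ≤ B * K * L ^ α := by
          refine hbwd t' ht'mem (fun s hs => ?_)
          have hsnotS : s ∉ S := by
            intro hsS
            have : s ≤ t₁ := le_csSup hSbdd hsS
            linarith [ht't.trans_le hs.1]
          by_contra hle
          push_neg at hle
          exact hsnotS ⟨⟨ht'mem.1.trans hs.1, hs.2⟩, hle⟩
        calc |u x - u y| ≤ |u x - u (γ t')| + |u (γ t') - u y| := abs_sub_le _ _ _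
          _ ≤ (|u x - u (γ t₁)| + |u (γ t₁) - u (γ t')|) + |u (γ t') - u y| := by
              linarith [abs_sub_le (u x) (u (γ t₁)) (u (γ t'))]
          _ ≤ (B * K * L ^ α + ε) + B * K * L ^ α := by
              rw [abs_sub_comm (u x), abs_sub_comm (u (γ t'))]
              linarith [h1, hmid.le, h3]
          _ = 2 * B * K * L ^ α + ε := by ring
    · -- case (b) : Vr t₁ > L/2
      have ht₁pos : 0 < t₁ := by
        rcases eq_or_lt_of_le ht₁mem.1 with h0 | h0
        · exfalso; rw [← h0, hVr0] at hcase; linarith [hL0]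
        · exact h0
      set t' : ℝ := max 0 (t₁ - δ/2) with ht'
      have ht'mem : t' ∈ Icc (0:ℝ) 1 :=
        ⟨le_max_left _ _, max_le (zero_le_one) (by linarith [ht₁mem.2])⟩
      have ht't : t' < t₁ := max_lt ht₁pos (by linarith)
      have hdist : dist t' t₁ < δ := by
        rw [Real.dist_eq, abs_of_nonpos (by linarith)]
        have : t₁ - δ/2 ≤ t' := le_max_right _ _
        linarith
      have hmid : |u (γ t₁) - u (γ t')| < ε := by
        have := hδ ht'mem hdist
        rwa [Function.comp_apply, Function.comp_apply, Real.dist_eq, abs_sub_comm] at this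
      have h1 : |u (γ t') - u x| ≤ B * K * L ^ α := by
        refine hfwd t' ht'mem (fun s hs => ?_)
        obtain ⟨r, hrS, hrgt⟩ := exists_lt_of_lt_csSup hSne ht't
        have : Vr s ≤ Vr r := hVmono s r (hs.2.trans hrgt.le) hrS.1
        linarith [hrS.2]
      have h3 : |u y - u (γ t₁)| ≤ B * K * L ^ α := by
        refine hbwd t₁ ht₁mem (fun s hs => ?_)
        rcases eq_or_lt_of_le hs.1 with heq | hlt
        · rw [← heq]; exact hcase
        · have hsnotS : s ∉ S := by
            intro hsS
            have : s ≤ t₁ := le_csSup hSbdd hsS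
            linarith
          by_contra hle
          push_neg at hle
          exact hsnotS ⟨⟨ht₁mem.1.trans hs.1, hs.2⟩, hle⟩
      calc |u x - u y| ≤ |u x - u (γ t₁)| + |u (γ t₁) - u y| := abs_sub_le _ _ _
        _ ≤ (|u x - u (γ t')| + |u (γ t') - u (γ t₁)|) + |u (γ t₁) - u y| := by
            linarith [abs_sub_le (u x) (u (γ t')) (u (γ t₁))]
        _ ≤ (B * K * L ^ α + ε) + B * K * L ^ α := by
            rw [abs_sub_comm (u x), abs_sub_comm (u (γ t')) (u (γ t₁)),
              abs_sub_comm (u (γ t₁)) (u y)]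
            linarith [h1, hmid.le, h3]
        _ = 2 * B * K * L ^ α + ε := by ring
  simp only [hε] at hfinal
  linarith

def UniformDomain (n : ℕ) (Ω : Set (En n)) : Prop :=
  Ω.Nonempty ∧ Ω ≠ Set.univ ∧ IsOpen Ω ∧
  ∃ c : ℝ, 0 < c ∧ ∀ x ∈ Ω, ∀ y ∈ Ω,
    ∃ γ : ℝ → En n, ContinuousOn γ (Set.Icc 0 1) ∧ γ 0 = x ∧ γ 1 = y ∧
      (∀ t ∈ Set.Icc (0 : ℝ) 1, γ t ∈ Ω) ∧
      eVariationOn γ (Set.Icc 0 1) ≤ ENNReal.ofReal (c * dist x y) ∧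
      ∀ t ∈ Set.Icc (0 : ℝ) 1,
        min (eVariationOn γ (Set.Icc 0 t)) (eVariationOn γ (Set.Icc t 1)) ≤
          ENNReal.ofReal (c * Metric.infDist (γ t) (frontier Ω))

/-- in a uniform domain Ω, for each α ∈ (0,1) there is a constant C > 0,
depending only on α and Ω, such that every C¹ function u on Ω satisfies
[u]_{C^α(Ω)} ≤ C · sup_{x∈Ω} dist(x,∂Ω)^{1−α} |∇u(x)|. (The supremum is expressed by
quantifying over upper bounds K of the weighted gradient.) -/
theorem holder_seminorm_le_weighted_gradient_sup
    (n : ℕ) (Ω : Set (En n)) (hΩ : UniformDomain n Ω) (α : ℝ) (hα : α ∈ Set.Ioo (0 : ℝ) 1) :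
    ∃ C : ℝ, 0 < C ∧
      ∀ u : En n → ℝ, ContDiffOn ℝ 1 u Ω →
        ∀ K : ℝ, (∀ z ∈ Ω, Metric.infDist z (frontier Ω) ^ (1 - α) *
            ‖fderivWithin ℝ u Ω z‖ ≤ K) →
          ∀ x ∈ Ω, ∀ y ∈ Ω, |u x - u y| ≤ C * K * dist x y ^ α := by
  obtain ⟨hne, huniv, hop, c, hc, hcurve⟩ := hΩ
  exact holder_main n Ω hne huniv hop c hc hcurve α hα.1 hα.2
end
end

section
/- Let n ≥ 3 and let P be an odd, harmonic, homogeneous polynomial of degree l ≥ 3 on ℝ^n. For r,s ∈ {1,…,n} define P_{rs} := (l(l−1))^{−1} ∂_r∂_s P. Then: (i) each P_{rs} is an odd, harmonic, homogeneous polynomial of degree l−2; (ii) P(x) = Σ_{r,s=1}^n x_r x_s P_{rs}(x) for all x ∈ ℝ^n; (iii) for every x ∈ ℝ^n \ {0}, Σ_{r,s=1}^n ∂_r∂_s ( P_{rs}(x) |x|^{−(n+l−5)} ) = (n+l−3)(n+l−5) · P(x) |x|^{−(n−1+l)}. -/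
open MeasureTheory Metric Set Filter
open scoped ENNReal NNReal Topology

noncomputable section

/-- P is odd: P(−x) = −P(x) for all x. -/
def IsOddPoly (n : ℕ) (P : MvPolynomial (Fin n) ℝ) : Prop :=
  ∀ x : Fin n → ℝ, MvPolynomial.eval (-x) P = -MvPolynomial.eval x P

/-- P is harmonic: ΔP = 0. -/
def IsHarmonicPoly (n : ℕ) (P : MvPolynomial (Fin n) ℝ) : Prop :=
  ∑ j : Fin n, MvPolynomial.pderiv j (MvPolynomial.pderiv j P) = 0

/-- The partial derivative ∂_r of a function on ℝⁿ. -/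
def partialDer (n : ℕ) (r : Fin n) (f : En n → ℝ) : En n → ℝ :=
  fun x => fderiv ℝ f x (EuclideanSpace.single r 1)

namespace SemmesAux

open MvPolynomial

variable {n : ℕ}

theorem pderiv_pderiv_X (a b i : Fin n) :
    pderiv a (pderiv b (X i : MvPolynomial (Fin n) ℝ)) = 0 := by
  rcases eq_or_ne i b with rfl | h
  · simp
  · simp [pderiv_X_of_ne h]

theorem pderiv_comm (r s : Fin n) (p : MvPolynomial (Fin n) ℝ) :
    pderiv r (pderiv s p) = pderiv s (pderiv r p) := by
  induction p using MvPolynomial.induction_on with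
  | C a => simp
  | add p q hp hq => simp [hp, hq]
  | mul_X p i hp =>
      simp only [pderiv_mul, map_add, pderiv_mul, hp, pderiv_pderiv_X]
      ring

theorem pderiv_smul' (i : Fin n) (a : ℝ) (p : MvPolynomial (Fin n) ℝ) :
    pderiv i (a • p) = a • pderiv i p := by
  rw [smul_eq_C_mul, smul_eq_C_mul, pderiv_C_mul]

theorem lap_pderiv_comm (r : Fin n) (Q : MvPolynomial (Fin n) ℝ) :
    ∑ j : Fin n, pderiv j (pderiv j (pderiv r Q)) =
      pderiv r (∑ j : Fin n, pderiv j (pderiv j Q)) := by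
  rw [map_sum]
  refine Finset.sum_congr rfl fun j _ => ?_
  rw [pderiv_comm j r Q, pderiv_comm j r (pderiv j Q)]

theorem X_mul_pderiv_monomial (i : Fin n) (d : Fin n →₀ ℕ) (a : ℝ) :
    (X i : MvPolynomial (Fin n) ℝ) * pderiv i (monomial d a) = d i • monomial d a := by
  rw [pderiv_monomial]
  rcases Nat.eq_zero_or_pos (d i) with h | h
  · simp [h]
  · rw [X, monomial_mul, one_mul]
    have hd : (Finsupp.single i 1 + (d - Finsupp.single i 1)) = d := by
      ext j
      rcases eq_or_ne j i with rfl | hj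
      · simp only [Finsupp.coe_add, Finsupp.coe_tsub, Pi.add_apply, Pi.sub_apply,
          Finsupp.single_eq_same]
        omega
      · simp [Finsupp.single_apply, Ne.symm hj]
    rw [hd, smul_monomial, nsmul_eq_mul, mul_comm]

theorem degree_of_mem_support {Q : MvPolynomial (Fin n) ℝ} {k : ℕ} (hQ : Q.IsHomogeneous k)
    {d : Fin n →₀ ℕ} (hd : d ∈ Q.support) : d.degree = k := by
  rw [Finsupp.degree_eq_weight_one]
  exact hQ (mem_support_iff.mp hd)

theorem degree_eq_sum_univ (d : Fin n →₀ ℕ) : d.degree = ∑ i : Fin n, d i := by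
  rw [Finsupp.degree]
  exact Finset.sum_subset (Finset.subset_univ _) (by simp +contextual [Finsupp.notMem_support_iff])

theorem euler {Q : MvPolynomial (Fin n) ℝ} {k : ℕ} (hQ : Q.IsHomogeneous k) :
    ∑ i : Fin n, X i * pderiv i Q = k • Q := by
  conv_lhs => rw [← Q.support_sum_monomial_coeff]
  simp only [map_sum, Finset.mul_sum]
  rw [Finset.sum_comm]
  have h : ∀ d ∈ Q.support,
      ∑ i : Fin n, X i * pderiv i (monomial d (coeff d Q)) = k • monomial d (coeff d Q) := by
    intro d hd
    simp only [X_mul_pderiv_monomial]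
    rw [← Finset.sum_smul, ← degree_eq_sum_univ, degree_of_mem_support hQ hd]
  rw [Finset.sum_congr rfl h, ← Finset.smul_sum, Q.support_sum_monomial_coeff]

theorem pderiv_isHomogeneous {Q : MvPolynomial (Fin n) ℝ} {k : ℕ} (hQ : Q.IsHomogeneous k)
    (i : Fin n) : (pderiv i Q).IsHomogeneous (k - 1) := by
  conv_lhs => rw [← Q.support_sum_monomial_coeff]
  rw [map_sum]
  apply IsHomogeneous.sum
  intro d hd
  rw [pderiv_monomial]
  rcases Nat.eq_zero_or_pos (d i) with h | h
  · simp only [h, Nat.cast_zero, mul_zero, monomial_zero]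
    exact isHomogeneous_zero _ _ _
  · apply isHomogeneous_monomial
    have h1 : d.degree = k := degree_of_mem_support hQ hd
    have hsplit : d = (d - Finsupp.single i 1) + Finsupp.single i 1 := by
      ext j
      rcases eq_or_ne j i with rfl | hj
      · simp only [Finsupp.coe_add, Finsupp.coe_tsub, Pi.add_apply, Pi.sub_apply,
          Finsupp.single_eq_same]
        omega
      · simp [Finsupp.single_apply, Ne.symm hj]
    have hdeg1 : (Finsupp.single i (1 : ℕ)).degree = 1 := by
      simp [Finsupp.degree_single]
    have h2 : d.degree = (d - Finsupp.single i 1).degree + 1 := by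
      conv_lhs => rw [hsplit]
      simp only [Finsupp.degree_eq_weight_one, map_add]
      rw [show ((Finsupp.weight (fun _ => (1:ℕ))) (Finsupp.single i (1:ℕ))) = (Finsupp.single i (1:ℕ)).degree by
        rw [Finsupp.degree_eq_weight_one], hdeg1]
    omega

theorem eval_neg_of_isHomogeneous {Q : MvPolynomial (Fin n) ℝ} {k : ℕ} (hQ : Q.IsHomogeneous k)
    (x : Fin n → ℝ) : eval (-x) Q = (-1) ^ k * eval x Q := by
  conv_lhs => rw [← Q.support_sum_monomial_coeff]
  conv_rhs => rw [← Q.support_sum_monomial_coeff]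
  rw [map_sum, map_sum, Finset.mul_sum]
  apply Finset.sum_congr rfl
  intro d hd
  rw [eval_monomial, eval_monomial, Finsupp.prod, Finsupp.prod]
  have step : ∀ i ∈ d.support, ((-x : Fin n → ℝ) i) ^ d i = (-1 : ℝ) ^ d i * (x i) ^ d i := by
    intro i _
    rw [Pi.neg_apply, neg_pow]
  rw [Finset.prod_congr rfl step, Finset.prod_mul_distrib, Finset.prod_pow_eq_pow_sum]
  have hdeg : ∑ i ∈ d.support, d i = k := by
    have h := degree_of_mem_support hQ hd
    rwa [Finsupp.degree] at h
  rw [hdeg]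
  ring

/-- The full derivative of polynomial evaluation. -/
def polyD (Q : MvPolynomial (Fin n) ℝ) (x : En n) : En n →L[ℝ] ℝ :=
  ∑ i : Fin n,
    MvPolynomial.eval (fun j => x j) (pderiv i Q) • (EuclideanSpace.proj i : En n →L[ℝ] ℝ)

theorem hasFDerivAt_eval (Q : MvPolynomial (Fin n) ℝ) (x : En n) :
    HasFDerivAt (fun y : En n => MvPolynomial.eval (fun i => y i) Q) (polyD Q x) x := by
  induction Q using MvPolynomial.induction_on with
  | C a =>
      have h : polyD (C a : MvPolynomial (Fin n) ℝ) x = 0 := by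
        simp [polyD]
      rw [h]
      simpa using hasFDerivAt_const (eval (fun i => x i) (C a : MvPolynomial (Fin n) ℝ)) x
  | add p q hp hq =>
      have h : polyD (p + q) x = polyD p x + polyD q x := by
        simp [polyD, Finset.sum_add_distrib, add_smul]
      rw [h]
      simp only [eval_add]
      exact hp.add hq
  | mul_X p i hp =>
      have hXi : HasFDerivAt (fun y : En n => y i) (EuclideanSpace.proj i (𝕜 := ℝ)) x :=
        (EuclideanSpace.proj i (𝕜 := ℝ)).hasFDerivAt
      have hmul := hp.mul hXi
      have hD : polyD (p * X i) x =
          (fun j => x j) i • polyD p x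
            + eval (fun j => x j) p • (EuclideanSpace.proj i : En n →L[ℝ] ℝ) := by
        simp only [polyD, pderiv_mul, map_add, eval_add, eval_mul, add_smul,
          Finset.sum_add_distrib]
        congr 1
        · rw [Finset.smul_sum]
          apply Finset.sum_congr rfl
          intro j _
          rcases eq_or_ne i j with rfl | hj
          · simp [smul_smul, mul_comm]
          · simp [pderiv_X_of_ne (Ne.symm hj), smul_smul, mul_comm]
        · rw [Finset.sum_eq_single i]
          · simp
          · intro j _ hj
            simp [pderiv_X_of_ne (Ne.symm hj)]
          · simp
      rw [hD]
      simp only [eval_mul, eval_X]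
      rw [add_comm]
      exact hmul

theorem hasFDerivAt_norm' {x : En n} (hx : x ≠ 0) :
    HasFDerivAt (fun y : En n => ‖y‖) (‖x‖⁻¹ • innerSL ℝ x) x := by
  have hsq : HasFDerivAt (fun y : En n => ‖y‖ ^ 2) (2 • innerSL ℝ x) x :=
    (hasStrictFDerivAt_norm_sq x).hasFDerivAt
  have hnx : ‖x‖ ^ 2 ≠ 0 := pow_ne_zero _ (norm_ne_zero_iff.mpr hx)
  have hsqrt : HasDerivAt Real.sqrt (1 / (2 * Real.sqrt (‖x‖ ^ 2))) (‖x‖ ^ 2) :=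
    Real.hasDerivAt_sqrt hnx
  have hcomp := hsqrt.comp_hasFDerivAt x hsq
  have heq : (Real.sqrt ∘ fun y : En n => ‖y‖ ^ 2) = fun y : En n => ‖y‖ := by
    funext y
    simp [Function.comp, Real.sqrt_sq (norm_nonneg y)]
  rw [heq] at hcomp
  refine HasFDerivAt.congr_fderiv hcomp (Eq.symm ?_)
  ext y
  have hm : ‖x‖ ≠ 0 := norm_ne_zero_iff.mpr hx
  simp only [ContinuousLinearMap.smul_apply, smul_eq_mul, Real.sqrt_sq (norm_nonneg x)]
  field_simp
  ring

theorem hasFDerivAt_norm_pow_inv {x : En n} (hx : x ≠ 0) (m : ℕ) :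
    HasFDerivAt (fun y : En n => (‖y‖ ^ m)⁻¹)
      ((-(m : ℝ) * (‖x‖ ^ (m + 2))⁻¹) • innerSL ℝ x) x := by
  have hm : ‖x‖ ≠ 0 := norm_ne_zero_iff.mpr hx
  have h1 : HasDerivAt (fun t : ℝ => (t ^ m)⁻¹)
      (-((m : ℝ) * ‖x‖ ^ (m - 1)) / (‖x‖ ^ m) ^ 2) ‖x‖ :=
    (hasDerivAt_pow m ‖x‖).inv (pow_ne_zero _ hm)
  have hcomp := h1.comp_hasFDerivAt x (hasFDerivAt_norm' hx)
  refine HasFDerivAt.congr_fderiv hcomp (Eq.symm ?_)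
  rw [smul_smul]
  congr 1
  rcases Nat.eq_zero_or_pos m with rfl | hmp
  · simp
  · have e2 : ‖x‖ ^ 2 * ‖x‖ ^ m * ‖x‖ ^ (m - 1) = ‖x‖ * ‖x‖ ^ (m * 2) := by
      rw [← pow_add, ← pow_add, ← pow_succ']
      congr 1
      omega
    field_simp
    ring_nf
    rw [mul_assoc, ← e2]
    ring

/-- The basic building block `Q(x)/‖x‖^m`. -/
def FF (n : ℕ) (Q : MvPolynomial (Fin n) ℝ) (m : ℕ) : En n → ℝ :=
  fun y => MvPolynomial.eval (fun i => y i) Q / ‖y‖ ^ m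

theorem hasFDerivAt_FF (Q : MvPolynomial (Fin n) ℝ) (m : ℕ) {x : En n} (hx : x ≠ 0) :
    HasFDerivAt (FF n Q m)
      (MvPolynomial.eval (fun i => x i) Q • ((-(m : ℝ) * (‖x‖ ^ (m + 2))⁻¹) • innerSL ℝ x)
        + (‖x‖ ^ m)⁻¹ • polyD Q x) x := by
  have h := (hasFDerivAt_eval Q x).mul (hasFDerivAt_norm_pow_inv hx m)
  have heq : FF n Q m = fun y : En n => MvPolynomial.eval (fun i => y i) Q * (‖y‖ ^ m)⁻¹ := by
    funext y
    rw [FF, div_eq_mul_inv]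
  rw [heq]
  exact h

theorem partialDer_FF (Q : MvPolynomial (Fin n) ℝ) (m : ℕ) {x : En n} (hx : x ≠ 0) (r : Fin n) :
    partialDer n r (FF n Q m) x =
      FF n (pderiv r Q) m x - (m : ℝ) * FF n (X r * Q) (m + 2) x := by
  rw [partialDer, (hasFDerivAt_FF Q m hx).fderiv]
  have hproj : ∀ i : Fin n, (EuclideanSpace.proj i : En n →L[ℝ] ℝ)
      (EuclideanSpace.single r 1) = if i = r then 1 else 0 := by
    intro i
    have h : (EuclideanSpace.proj i : En n →L[ℝ] ℝ) (EuclideanSpace.single r 1)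
        = (EuclideanSpace.single r (1:ℝ)) i := rfl
    rw [h, EuclideanSpace.single_apply]
  have hinner : (innerSL ℝ x) (EuclideanSpace.single r (1:ℝ)) = x r := by
    simp [EuclideanSpace.inner_single_right]
  simp only [ContinuousLinearMap.add_apply, ContinuousLinearMap.smul_apply, smul_eq_mul,
    polyD, ContinuousLinearMap.sum_apply, hinner, hproj, mul_ite, mul_one, mul_zero,
    Finset.sum_ite_eq', Finset.mem_univ, if_true]
  unfold FF
  rw [eval_mul, eval_X]
  simp only [div_eq_mul_inv]
  ring

theorem partialDer_partialDer_FF (Q : MvPolynomial (Fin n) ℝ) (m : ℕ) {x : En n} (hx : x ≠ 0)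
    (r s : Fin n) :
    partialDer n r (partialDer n s (FF n Q m)) x =
      FF n (pderiv r (pderiv s Q)) m x
        - (m : ℝ) * FF n (X r * pderiv s Q) (m + 2) x
        - (m : ℝ) * (FF n (pderiv r (X s * Q)) (m + 2) x
            - ((m : ℝ) + 2) * FF n (X r * (X s * Q)) (m + 4) x) := by
  have hopen : {y : En n | y ≠ 0} ∈ 𝓝 x := by
    exact IsOpen.mem_nhds isOpen_compl_singleton hx
  have hev : partialDer n s (FF n Q m) =ᶠ[𝓝 x]
      fun y => FF n (pderiv s Q) m y - (m : ℝ) * FF n (X s * Q) (m + 2) y := by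
    filter_upwards [hopen] with y hy
    exact partialDer_FF Q m hy s
  rw [partialDer, hev.fderiv_eq]
  have hA := hasFDerivAt_FF (pderiv s Q) m hx
  have hB := hasFDerivAt_FF (X s * Q) (m + 2) hx
  have hg : HasFDerivAt (fun y => FF n (pderiv s Q) m y - (m : ℝ) * FF n (X s * Q) (m + 2) y) _ x :=
    hA.sub (hB.const_mul ((m : ℝ)))
  rw [hg.fderiv]
  have h1 := partialDer_FF (pderiv s Q) m hx r
  have h2 := partialDer_FF (X s * Q) (m + 2) hx r
  rw [partialDer, (hasFDerivAt_FF (pderiv s Q) m hx).fderiv] at h1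
  rw [partialDer, (hasFDerivAt_FF (X s * Q) (m + 2) hx).fderiv] at h2
  simp only [ContinuousLinearMap.sub_apply, ContinuousLinearMap.smul_apply, smul_eq_mul]
  rw [h1, h2]
  push_cast
  ring

end SemmesAux

open MvPolynomial SemmesAux

/-- for an odd harmonic homogeneous polynomial P of degree l ≥ 3 on ℝⁿ,
n ≥ 3, the polynomials P_{rs} := (l(l−1))⁻¹ ∂_r∂_s P are odd, harmonic, homogeneous of
degree l−2, satisfy P(x) = Σ_{r,s} x_r x_s P_{rs}(x), and for x ≠ 0 one has
Σ_{r,s} ∂_r∂_s(P_{rs}(x)|x|^{−(n+l−5)}) = (n+l−3)(n+l−5) P(x)|x|^{−(n−1+l)}. -/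
theorem semmes_decomposition
    (n : ℕ) (hn : 3 ≤ n) (l : ℕ) (hl : 3 ≤ l)
    (P : MvPolynomial (Fin n) ℝ) (hodd : IsOddPoly n P)
    (hharm : IsHarmonicPoly n P) (hhom : P.IsHomogeneous l)
    (Prs : Fin n → Fin n → MvPolynomial (Fin n) ℝ)
    (hPrs : ∀ r s, Prs r s =
      ((l : ℝ) * ((l : ℝ) - 1))⁻¹ • MvPolynomial.pderiv r (MvPolynomial.pderiv s P)) :
    (∀ r s, IsOddPoly n (Prs r s) ∧ IsHarmonicPoly n (Prs r s) ∧
        (Prs r s).IsHomogeneous (l - 2)) ∧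
    (∀ x : Fin n → ℝ, MvPolynomial.eval x P =
        ∑ r : Fin n, ∑ s : Fin n, x r * x s * MvPolynomial.eval x (Prs r s)) ∧
    (∀ x : En n, x ≠ 0 →
      ∑ r : Fin n, ∑ s : Fin n,
          partialDer n r (partialDer n s
            (fun y => MvPolynomial.eval (fun i => y i) (Prs r s) / ‖y‖ ^ (n + l - 5))) x =
        ((n : ℝ) + l - 3) * ((n : ℝ) + l - 5) *
          (MvPolynomial.eval (fun i => x i) P / ‖x‖ ^ (n - 1 + l))) := by
  set c : ℝ := ((l : ℝ) * ((l : ℝ) - 1))⁻¹ with hc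
  have hl3 : (3 : ℝ) ≤ (l : ℝ) := by exact_mod_cast hl
  have hlc : ((l : ℝ) * ((l : ℝ) - 1)) ≠ 0 := by nlinarith
  have hharm' : ∑ j : Fin n, pderiv j (pderiv j P) = 0 := hharm
  have lap3 : ∀ r : Fin n, ∑ j : Fin n, pderiv j (pderiv j (pderiv r P)) = 0 := by
    intro r
    rw [lap_pderiv_comm, hharm', map_zero]
  -- homogeneity of the Prs
  have hhom2 : ∀ r s : Fin n, (Prs r s).IsHomogeneous (l - 2) := by
    intro r s
    have h1 : (pderiv r (pderiv s P)).IsHomogeneous (l - 2) := by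
      have h := pderiv_isHomogeneous (pderiv_isHomogeneous hhom s) r
      rwa [show l - 1 - 1 = l - 2 by omega] at h
    rw [hPrs r s]
    exact Submodule.smul_mem (homogeneousSubmodule (Fin n) ℝ (l - 2)) c h1
  -- part (ii)
  have part2 : ∀ x : Fin n → ℝ, MvPolynomial.eval x P =
      ∑ r : Fin n, ∑ s : Fin n, x r * x s * MvPolynomial.eval x (Prs r s) := by
    intro x
    have e1 : ∀ s : Fin n, ∑ r : Fin n, x r * eval x (pderiv r (pderiv s P))
        = ((l - 1 : ℕ) : ℝ) * eval x (pderiv s P) := by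
      intro s
      have h := congrArg (eval x) (euler (pderiv_isHomogeneous hhom s))
      simpa [eval_mul, nsmul_eq_mul] using h
    have e2 : ∑ s : Fin n, x s * eval x (pderiv s P) = (l : ℝ) * eval x P := by
      have h := congrArg (eval x) (euler hhom)
      simpa [eval_mul, nsmul_eq_mul] using h
    have hcast : ((l - 1 : ℕ) : ℝ) = (l : ℝ) - 1 := by
      have : (1 : ℕ) ≤ l := by omega
      push_cast [Nat.cast_sub this]
      ring
    symm
    calc ∑ r : Fin n, ∑ s : Fin n, x r * x s * eval x (Prs r s)
        = ∑ s : Fin n, ∑ r : Fin n,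
            (x r * eval x (pderiv r (pderiv s P))) * (c * x s) := by
          rw [Finset.sum_comm]
          refine Finset.sum_congr rfl fun r _ => Finset.sum_congr rfl fun s _ => ?_
          rw [hPrs s r, smul_eval]
          ring
      _ = ∑ s : Fin n, (((l - 1 : ℕ) : ℝ) * eval x (pderiv s P)) * (c * x s) := by
          refine Finset.sum_congr rfl fun s _ => ?_
          rw [← Finset.sum_mul, e1 s]
      _ = ∑ s : Fin n, (((l - 1 : ℕ) : ℝ) * c) * (x s * eval x (pderiv s P)) := by
          refine Finset.sum_congr rfl fun s _ => ?_
          ring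
      _ = (((l - 1 : ℕ) : ℝ) * c) * ((l : ℝ) * eval x P) := by
          rw [← Finset.mul_sum, e2]
      _ = eval x P := by
          rw [hcast, hc]
          have hl1 : (l : ℝ) - 1 ≠ 0 := by linarith
          field_simp
  refine ⟨?_, part2, ?_⟩
  · -- part (i)
    intro r s
    refine ⟨?_, ?_, hhom2 r s⟩
    · -- odd
      rcases Nat.even_or_odd l with he | ho
      · have hP0 : P = 0 := by
          apply MvPolynomial.funext
          intro x
          have h1 := hodd x
          have h2 := eval_neg_of_isHomogeneous hhom x
          rw [he.neg_one_pow, one_mul] at h2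
          rw [map_zero]
          linarith [h1, h2]
        intro x
        rw [hPrs r s, hP0]
        simp
      · intro x
        rw [eval_neg_of_isHomogeneous (hhom2 r s) x,
          Odd.neg_one_pow (by rw [Nat.odd_iff] at ho ⊢; omega), neg_one_mul]
    · -- harmonic
      show ∑ j : Fin n, pderiv j (pderiv j (Prs r s)) = 0
      have h : ∀ j : Fin n, pderiv j (pderiv j (Prs r s))
          = c • pderiv j (pderiv j (pderiv r (pderiv s P))) := by
        intro j
        rw [hPrs r s, pderiv_smul', pderiv_smul']
      rw [Finset.sum_congr rfl fun j _ => h j, ← Finset.smul_sum,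
        lap_pderiv_comm, lap_pderiv_comm, hharm', map_zero, map_zero, smul_zero]
  · -- part (iii)
    intro x hx
    set m : ℕ := n + l - 5 with hm
    have hm4 : m + 4 = n - 1 + l := by omega
    have main : ∀ r s : Fin n,
        partialDer n r (partialDer n s
          (fun y : En n => MvPolynomial.eval (fun i => y i) (Prs r s) / ‖y‖ ^ (n + l - 5))) x =
        FF n (pderiv r (pderiv s (Prs r s))) m x
          - (m : ℝ) * FF n (X r * pderiv s (Prs r s)) (m + 2) x
          - (m : ℝ) * (FF n (pderiv r (X s * Prs r s)) (m + 2) x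
              - ((m : ℝ) + 2) * FF n (X r * (X s * Prs r s)) (m + 4) x) := by
      intro r s
      exact partialDer_partialDer_FF (Prs r s) m hx r s
    rw [Finset.sum_congr rfl fun r _ => Finset.sum_congr rfl fun s _ => main r s]
    -- the four sum identities
    have S1 : ∑ r : Fin n, ∑ s : Fin n,
        eval (fun i => x i) (pderiv r (pderiv s (Prs r s))) = 0 := by
      have hpoly : ∀ r : Fin n, ∑ s : Fin n, pderiv r (pderiv s (Prs r s)) = 0 := by
        intro r
        have h : ∀ s : Fin n, pderiv r (pderiv s (Prs r s))
            = c • pderiv r (pderiv r (pderiv s (pderiv s P))) := by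
          intro s
          rw [hPrs r s, pderiv_smul', pderiv_smul', pderiv_comm s r (pderiv s P)]
        rw [Finset.sum_congr rfl fun s _ => h s, ← Finset.smul_sum, ← map_sum, ← map_sum,
          hharm', map_zero, map_zero, smul_zero]
      refine Finset.sum_eq_zero fun r _ => ?_
      rw [← map_sum, hpoly r, map_zero]
    have S2 : ∑ r : Fin n, ∑ s : Fin n,
        eval (fun i => x i) (X r * pderiv s (Prs r s)) = 0 := by
      have hpoly : ∀ r : Fin n, ∑ s : Fin n, pderiv s (Prs r s) = 0 := by
        intro r
        have h : ∀ s : Fin n, pderiv s (Prs r s)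
            = c • pderiv r (pderiv s (pderiv s P)) := by
          intro s
          rw [hPrs r s, pderiv_smul', pderiv_comm s r (pderiv s P)]
        rw [Finset.sum_congr rfl fun s _ => h s, ← Finset.smul_sum, ← map_sum,
          hharm', map_zero, smul_zero]
      refine Finset.sum_eq_zero fun r _ => ?_
      simp only [eval_mul, eval_X]
      rw [← Finset.mul_sum, ← map_sum, hpoly r, map_zero, mul_zero]
    have S3 : ∑ r : Fin n, ∑ s : Fin n,
        eval (fun i => x i) (pderiv r (X s * Prs r s)) = 0 := by
      have hsplit : ∀ r s : Fin n, pderiv r (X s * Prs r s)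
          = pderiv r (X s) * Prs r s + X s * pderiv r (Prs r s) := by
        intro r s
        rw [pderiv_mul]
      have hA : ∑ r : Fin n, ∑ s : Fin n,
          eval (fun i => x i) (pderiv r (X s) * Prs r s) = 0 := by
        have h1 : ∀ r s : Fin n, eval (fun i => x i) (pderiv r (X s) * Prs r s)
            = if s = r then eval (fun i => x i) (Prs r s) else 0 := by
          intro r s
          rcases eq_or_ne s r with rfl | hsr
          · simp
          · simp [pderiv_X_of_ne hsr, hsr]
        simp only [h1]
        have h2 : ∀ r : Fin n, (∑ s : Fin n,
            if s = r then eval (fun i => x i) (Prs r s) else 0)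
            = eval (fun i => x i) (Prs r r) := by
          intro r
          rw [Finset.sum_ite_eq' Finset.univ r (fun s => eval (fun i => x i) (Prs r s))]
          simp
        rw [Finset.sum_congr rfl fun r _ => h2 r]
        have hpoly : ∑ r : Fin n, Prs r r = 0 := by
          have h : ∀ r : Fin n, Prs r r = c • pderiv r (pderiv r P) := fun r => hPrs r r
          rw [Finset.sum_congr rfl fun r _ => h r, ← Finset.smul_sum, hharm', smul_zero]
        rw [← map_sum, hpoly, map_zero]
      have hB : ∑ r : Fin n, ∑ s : Fin n,
          eval (fun i => x i) (X s * pderiv r (Prs r s)) = 0 := by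
        rw [Finset.sum_comm]
        refine Finset.sum_eq_zero fun s _ => ?_
        have hpoly : ∑ r : Fin n, pderiv r (Prs r s) = 0 := by
          have h : ∀ r : Fin n, pderiv r (Prs r s)
              = c • pderiv r (pderiv r (pderiv s P)) := by
            intro r
            rw [hPrs r s, pderiv_smul']
          rw [Finset.sum_congr rfl fun r _ => h r, ← Finset.smul_sum, lap3 s, smul_zero]
        simp only [eval_mul, eval_X]
        rw [← Finset.mul_sum, ← map_sum, hpoly, map_zero, mul_zero]
      calc ∑ r : Fin n, ∑ s : Fin n, eval (fun i => x i) (pderiv r (X s * Prs r s))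
          = ∑ r : Fin n, ∑ s : Fin n,
              (eval (fun i => x i) (pderiv r (X s) * Prs r s)
                + eval (fun i => x i) (X s * pderiv r (Prs r s))) := by
            refine Finset.sum_congr rfl fun r _ => Finset.sum_congr rfl fun s _ => ?_
            rw [hsplit r s, map_add]
        _ = 0 := by
            simp only [Finset.sum_add_distrib]
            rw [hA, hB, add_zero]
    have S4 : ∑ r : Fin n, ∑ s : Fin n,
        eval (fun i => x i) (X r * (X s * Prs r s)) = eval (fun i => x i) P := by
      rw [part2 (fun i => x i)]
      refine Finset.sum_congr rfl fun r _ => Finset.sum_congr rfl fun s _ => ?_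
      simp only [eval_mul, eval_X]
      ring
    -- combine
    calc ∑ r : Fin n, ∑ s : Fin n,
          (FF n (pderiv r (pderiv s (Prs r s))) m x
            - (m : ℝ) * FF n (X r * pderiv s (Prs r s)) (m + 2) x
            - (m : ℝ) * (FF n (pderiv r (X s * Prs r s)) (m + 2) x
                - ((m : ℝ) + 2) * FF n (X r * (X s * Prs r s)) (m + 4) x))
        = ∑ r : Fin n, ∑ s : Fin n,
            (eval (fun i => x i) (pderiv r (pderiv s (Prs r s))) * (‖x‖ ^ m)⁻¹
              + (-(m : ℝ) * (‖x‖ ^ (m + 2))⁻¹)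
                  * eval (fun i => x i) (X r * pderiv s (Prs r s))
              + (-(m : ℝ) * (‖x‖ ^ (m + 2))⁻¹)
                  * eval (fun i => x i) (pderiv r (X s * Prs r s))
              + ((m : ℝ) * ((m : ℝ) + 2) * (‖x‖ ^ (m + 4))⁻¹)
                  * eval (fun i => x i) (X r * (X s * Prs r s))) := by
          refine Finset.sum_congr rfl fun r _ => Finset.sum_congr rfl fun s _ => ?_
          simp only [FF, div_eq_mul_inv]
          ring
      _ = (∑ r : Fin n, ∑ s : Fin n,
              eval (fun i => x i) (pderiv r (pderiv s (Prs r s)))) * (‖x‖ ^ m)⁻¹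
            + (-(m : ℝ) * (‖x‖ ^ (m + 2))⁻¹)
                * (∑ r : Fin n, ∑ s : Fin n,
                    eval (fun i => x i) (X r * pderiv s (Prs r s)))
            + (-(m : ℝ) * (‖x‖ ^ (m + 2))⁻¹)
                * (∑ r : Fin n, ∑ s : Fin n,
                    eval (fun i => x i) (pderiv r (X s * Prs r s)))
            + ((m : ℝ) * ((m : ℝ) + 2) * (‖x‖ ^ (m + 4))⁻¹)
                * (∑ r : Fin n, ∑ s : Fin n,
                    eval (fun i => x i) (X r * (X s * Prs r s))) := by
          simp only [Finset.sum_add_distrib, Finset.mul_sum, Finset.sum_mul]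
      _ = ((m : ℝ) * ((m : ℝ) + 2) * (‖x‖ ^ (m + 4))⁻¹) * eval (fun i => x i) P := by
          rw [S1, S2, S3, S4]
          ring
      _ = ((n : ℝ) + l - 3) * ((n : ℝ) + l - 5)
            * (eval (fun i => x i) P / ‖x‖ ^ (n - 1 + l)) := by
          rw [hm4]
          have hcm : (m : ℝ) = (n : ℝ) + l - 5 := by
            have h5 : (5 : ℕ) ≤ n + l := by omega
            rw [hm]
            push_cast [Nat.cast_sub h5]
            ring
          rw [hcm, div_eq_mul_inv]
          ring
end
end

section
/- Let φ : (0,1) → [0,∞) be Lebesgue measurable, and for each k ∈ ℕ₀ let δ_k := 2^{k+1} ∫_{2^{−(k+1)}}^{2^{−k}} φ(r) dr be the average of φ over the dyadic interval I_k = [2^{−(k+1)}, 2^{−k}]. Assume δ_k → 0 as k → ∞. Then there exists a Lebesgue measurable set O ⊆ (0,1) such that lim_{ε→0⁺} ℒ¹(O ∩ (0,ε))/ε = 1 (O has density 1 at 0) and lim_{O∋r→0⁺} φ(r) = 0. -/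
open MeasureTheory Metric Set Filter
open scoped ENNReal NNReal Topology

noncomputable section

/-- if φ : (0,1) → [0,∞) is measurable and its averages δ_k over the dyadic
intervals I_k = [2^{−(k+1)}, 2^{−k}] tend to 0, then there is a measurable set
O ⊆ (0,1) of density 1 at 0 along which φ(r) → 0 as r → 0⁺. -/
theorem density_one_set_with_vanishing_averages
    (φ : ℝ → ℝ) (hmeas : Measurable φ) (hnonneg : ∀ r ∈ Set.Ioo (0 : ℝ) 1, 0 ≤ φ r)
    (hδ : Filter.Tendsto
      (fun k : ℕ => (2 : ℝ≥0∞) ^ (k + 1) *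
        ∫⁻ r in Set.Icc (((2 : ℝ) ^ (k + 1))⁻¹) (((2 : ℝ) ^ k)⁻¹), ENNReal.ofReal (φ r))
      Filter.atTop (𝓝 0)) :
    ∃ O : Set ℝ, O ⊆ Set.Ioo (0 : ℝ) 1 ∧ MeasurableSet O ∧
      Filter.Tendsto (fun ε : ℝ => (volume (O ∩ Set.Ioo (0 : ℝ) ε)).toReal / ε)
        (𝓝[>] 0) (𝓝 1) ∧
      ∀ δ : ℝ, 0 < δ → ∃ r₀ : ℝ, 0 < r₀ ∧ ∀ r ∈ O, r < r₀ → φ r < δ := by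
  -- dyadic endpoints
  set a : ℕ → ℝ := fun k => ((2 : ℝ) ^ k)⁻¹ with ha_def
  have ha_pos : ∀ k, 0 < a k := fun k => by positivity
  have ha_anti : StrictAnti a := by
    intro i j hij
    exact inv_strictAnti₀ (by positivity) (pow_lt_pow_right₀ one_lt_two hij)
  have ha_le_one : ∀ k, a k ≤ 1 := by
    intro k
    simp only [ha_def]
    rw [inv_le_one_iff₀]
    right; exact one_le_pow₀ one_le_two
  have ha_tendsto : Tendsto a atTop (𝓝 0) := by
    have : a = fun k => ((2:ℝ)⁻¹) ^ k := by
      funext k; simp [ha_def, inv_pow]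
    rw [this]
    exact tendsto_pow_atTop_nhds_zero_of_lt_one (by norm_num) (by norm_num)
  have ha_half : ∀ k, a (k + 1) = a k / 2 := by
    intro k; simp [ha_def, pow_succ, mul_inv, div_eq_mul_inv, mul_comm]
  -- the averages
  set δk : ℕ → ℝ≥0∞ := fun k => (2 : ℝ≥0∞) ^ (k + 1) *
      ∫⁻ r in Set.Icc (((2 : ℝ) ^ (k + 1))⁻¹) (((2 : ℝ) ^ k)⁻¹), ENNReal.ofReal (φ r)
    with hδk_def
  set s : ℕ → ℝ := fun k => (δk k).toReal with hs_def
  set c : ℕ → ℝ := fun k => Real.sqrt (s k) + a k with hc_def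
  have hc_pos : ∀ k, 0 < c k := fun k =>
    add_pos_of_nonneg_of_pos (Real.sqrt_nonneg _) (ha_pos k)
  have hs_tendsto : Tendsto s atTop (𝓝 0) := by
    have := (ENNReal.tendsto_toReal (a := 0) (by simp)).comp hδ
    simpa [hs_def, Function.comp_def] using this
  have hc_tendsto : Tendsto c atTop (𝓝 0) := by
    have h1 : Tendsto (fun k => Real.sqrt (s k)) atTop (𝓝 0) := by
      have := (Real.continuous_sqrt.tendsto 0).comp hs_tendsto
      simpa [Function.comp_def] using this
    simpa using h1.add ha_tendsto
  -- the good sets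
  set Ok : ℕ → Set ℝ := fun k => Ioo (a (k + 1)) (a k) ∩ {r | φ r < c k} with hOk_def
  set O : Set ℝ := ⋃ k, Ok k with hO_def
  have hOk_sub : ∀ k, Ok k ⊆ Ioo (0 : ℝ) 1 := by
    intro k r hr
    obtain ⟨⟨h1, h2⟩, _⟩ := hr
    exact ⟨lt_trans (ha_pos (k + 1)) h1, lt_of_lt_of_le h2 (ha_le_one k)⟩
  have hOsub : O ⊆ Set.Ioo (0 : ℝ) 1 := iUnion_subset hOk_sub
  have hOmeas : MeasurableSet O :=
    MeasurableSet.iUnion fun k => measurableSet_Ioo.inter (hmeas measurableSet_Iio)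
  -- the bad sets
  set Bk : ℕ → Set ℝ := fun k =>
    Ioo (a (k + 1)) (a k) ∩ {r | ENNReal.ofReal (c k) ≤ ENNReal.ofReal (φ r)} with hBk_def
  -- Chebyshev bound
  have cheby : ∀ k, δk k ≠ ∞ →
      volume (Bk k) ≤ ENNReal.ofReal (Real.sqrt (s k)) * ENNReal.ofReal (a (k + 1)) := by
    intro k hfin
    have hc : 0 < c k := hc_pos k
    have hc0 : ENNReal.ofReal (c k) ≠ 0 := by
      simp [ENNReal.ofReal_eq_zero, not_le, hc]
    have hctop : ENNReal.ofReal (c k) ≠ ∞ := ENNReal.ofReal_ne_top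
    -- Chebyshev on the restricted measure
    have h1 : volume (Bk k) ≤
        (∫⁻ r in Ioo (a (k + 1)) (a k), ENNReal.ofReal (φ r)) / ENNReal.ofReal (c k) := by
      have hcheb := meas_ge_le_lintegral_div
        (μ := volume.restrict (Ioo (a (k + 1)) (a k)))
        (hmeas.ennreal_ofReal.aemeasurable) hc0 hctop
      have hset : (volume.restrict (Ioo (a (k + 1)) (a k)))
          {x | ENNReal.ofReal (c k) ≤ ENNReal.ofReal (φ x)} = volume (Bk k) := by
        rw [Measure.restrict_apply (by
          exact measurableSet_le measurable_const hmeas.ennreal_ofReal)]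
        rw [hBk_def]
        simp [Set.inter_comm]
      rwa [hset] at hcheb
    have h2 : (∫⁻ r in Ioo (a (k + 1)) (a k), ENNReal.ofReal (φ r)) ≤
        ∫⁻ r in Icc (a (k + 1)) (a k), ENNReal.ofReal (φ r) :=
      lintegral_mono_set Ioo_subset_Icc_self
    have h3 : (∫⁻ r in Icc (a (k + 1)) (a k), ENNReal.ofReal (φ r)) =
        ((2 : ℝ≥0∞) ^ (k + 1))⁻¹ * δk k := by
      rw [hδk_def]
      simp only []
      rw [← mul_assoc, ENNReal.inv_mul_cancel (by positivity) (by
        exact ENNReal.pow_ne_top (by norm_num)), one_mul]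
    have h4 : δk k / ENNReal.ofReal (c k) ≤ ENNReal.ofReal (Real.sqrt (s k)) := by
      rw [ENNReal.div_le_iff hc0 hctop]
      have hδeq : δk k = ENNReal.ofReal (s k) := by
        rw [hs_def]; exact (ENNReal.ofReal_toReal hfin).symm
      rw [hδeq, ← ENNReal.ofReal_mul (Real.sqrt_nonneg _)]
      apply ENNReal.ofReal_le_ofReal
      have hsq : Real.sqrt (s k) * Real.sqrt (s k) = s k :=
        Real.mul_self_sqrt ENNReal.toReal_nonneg
      simp only [hc_def]
      have h5 : 0 ≤ Real.sqrt (s k) * a k := mul_nonneg (Real.sqrt_nonneg _) (ha_pos k).le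
      nlinarith [hsq]
    have hofa : ENNReal.ofReal (a (k + 1)) = ((2 : ℝ≥0∞) ^ (k + 1))⁻¹ := by
      rw [ha_def]
      simp only []
      rw [ENNReal.ofReal_inv_of_pos (by positivity), ENNReal.ofReal_pow (by norm_num)]
      norm_num
    calc volume (Bk k)
        ≤ (∫⁻ r in Ioo (a (k + 1)) (a k), ENNReal.ofReal (φ r)) / ENNReal.ofReal (c k) := h1
      _ ≤ (∫⁻ r in Icc (a (k + 1)) (a k), ENNReal.ofReal (φ r)) / ENNReal.ofReal (c k) := by
          exact ENNReal.div_le_div_right h2 _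
      _ = ((2 : ℝ≥0∞) ^ (k + 1))⁻¹ * δk k / ENNReal.ofReal (c k) := by rw [h3]
      _ = ((2 : ℝ≥0∞) ^ (k + 1))⁻¹ * (δk k / ENNReal.ofReal (c k)) := by
          rw [div_eq_mul_inv, div_eq_mul_inv, mul_assoc]
      _ ≤ ((2 : ℝ≥0∞) ^ (k + 1))⁻¹ * ENNReal.ofReal (Real.sqrt (s k)) := by
          exact mul_le_mul_right h4 _
      _ = ENNReal.ofReal (Real.sqrt (s k)) * ENNReal.ofReal (a (k + 1)) := by
          rw [hofa, mul_comm]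
  -- partition lemma
  have hpart : ∀ r ∈ Set.Ioo (0 : ℝ) 1, ∃ j, a (j + 1) ≤ r ∧ r < a j := by
    intro r hr
    have hex : ∃ n, a (n + 1) ≤ r := by
      obtain ⟨n, hn⟩ := exists_pow_lt_of_lt_one hr.1 (show (2:ℝ)⁻¹ < 1 by norm_num)
      refine ⟨n, le_trans ?_ hn.le⟩
      show ((2:ℝ) ^ (n+1))⁻¹ ≤ (2:ℝ)⁻¹ ^ n
      rw [← inv_pow]
      exact pow_le_pow_of_le_one (by norm_num) (by norm_num) (Nat.le_succ n)
    refine ⟨Nat.find hex, Nat.find_spec hex, ?_⟩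
    rcases Nat.eq_zero_or_pos (Nat.find hex) with h0 | hpos
    · rw [h0]
      have : a 0 = 1 := by simp [ha_def]
      rw [this]; exact hr.2
    · have hmin := Nat.find_min hex (Nat.pred_lt hpos.ne')
      have hlt : r < a (Nat.find hex - 1 + 1) := lt_of_not_ge hmin
      rwa [Nat.sub_add_cancel hpos] at hlt
  -- covering lemma for the bad part
  have hcover : ∀ ε : ℝ, 0 < ε → ε ≤ 1 → ∀ m : ℕ,
      a (m + 1) < ε → (∀ j < m, ε ≤ a (j + 1)) →
      Set.Ioo 0 ε \ O ⊆ Set.range a ∪ (⋃ i : ℕ, Bk (m + i)) := by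
    intro ε hε0 hε1 m hm hminm r hr
    obtain ⟨⟨hr0, hrε⟩, hrO⟩ := hr
    obtain ⟨j, hj1, hj2⟩ := hpart r ⟨hr0, lt_of_lt_of_le hrε hε1⟩
    by_cases hre : r = a (j + 1)
    · exact Or.inl ⟨j + 1, hre.symm⟩
    · right
      have hrIoo : r ∈ Ioo (a (j + 1)) (a j) := ⟨lt_of_le_of_ne hj1 (Ne.symm hre), hj2⟩
      have hnotOk : r ∉ Ok j := fun h => hrO (mem_iUnion.mpr ⟨j, h⟩)
      have hcle : c j ≤ φ r := by
        by_contra hlt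
        exact hnotOk ⟨hrIoo, lt_of_not_ge hlt⟩
      have hjm : m ≤ j := by
        by_contra hjm
        push_neg at hjm
        exact absurd (hminm j hjm) (not_le.mpr (lt_of_le_of_lt hj1 hrε))
      refine mem_iUnion.mpr ⟨j - m, ?_⟩
      have hmj : m + (j - m) = j := Nat.add_sub_cancel' hjm
      rw [hmj]
      exact ⟨hrIoo, ENNReal.ofReal_le_ofReal hcle⟩
  have hsqrt_tendsto : Tendsto (fun k => Real.sqrt (s k)) atTop (𝓝 0) := by
    have := (Real.continuous_sqrt.tendsto 0).comp hs_tendsto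
    simpa [Function.comp_def] using this
  refine ⟨O, hOsub, hOmeas, ?_, ?_⟩
  · -- density one at 0
    rw [Metric.tendsto_nhdsWithin_nhds]
    intro δ' hδ'
    have hδ4 : 0 < δ' / 4 := by linarith
    have h1 : ∀ᶠ k in atTop, δk k < ∞ :=
      hδ.eventually (gt_mem_nhds (show (0 : ℝ≥0∞) < ∞ by simp))
    have h2 : ∀ᶠ k in atTop, Real.sqrt (s k) < δ' / 4 :=
      hsqrt_tendsto.eventually (gt_mem_nhds hδ4)
    obtain ⟨K, hK⟩ := eventually_atTop.mp (h1.and h2)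
    refine ⟨a K, ha_pos K, ?_⟩
    intro ε hε hdist
    have hε0 : 0 < ε := hε
    have hεK : ε < a K := by
      rw [Real.dist_eq, sub_zero, abs_of_pos hε0] at hdist
      exact hdist
    have hε1 : ε ≤ 1 := le_trans hεK.le (ha_le_one K)
    have hexm : ∃ m, a (m + 1) < ε := by
      obtain ⟨n, hn⟩ := (ha_tendsto.eventually (gt_mem_nhds hε0)).exists
      exact ⟨n, lt_of_le_of_lt (ha_anti.antitone (Nat.le_succ n)) hn⟩
    have hm : a (Nat.find hexm + 1) < ε := Nat.find_spec hexm
    have hmin : ∀ j < Nat.find hexm, ε ≤ a (j + 1) :=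
      fun j hj => le_of_not_gt (Nat.find_min hexm hj)
    set m := Nat.find hexm with hm_def
    have hmK : K ≤ m := by
      by_contra h
      push_neg at h
      have : a K ≤ a (m + 1) := ha_anti.antitone h
      exact absurd hεK (not_lt.mpr (le_trans this hm.le))
    -- bound the bad part
    have hsum : (∑' i : ℕ, ENNReal.ofReal (a (m + i + 1))) =
        ENNReal.ofReal (2 * a (m + 1)) := by
      have hgeo : ∀ i : ℕ, a (m + i + 1) = a (m + 1) * (2⁻¹ : ℝ) ^ i := by
        intro i
        simp only [ha_def]
        rw [show m + i + 1 = (m + 1) + i by ring, pow_add, mul_inv, inv_pow]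
      have hsummable : Summable (fun i : ℕ => a (m + 1) * (2⁻¹ : ℝ) ^ i) :=
        (summable_geometric_of_lt_one (by norm_num) (by norm_num)).mul_left _
      calc (∑' i : ℕ, ENNReal.ofReal (a (m + i + 1)))
          = ∑' i : ℕ, ENNReal.ofReal (a (m + 1) * (2⁻¹ : ℝ) ^ i) := by
            congr 1; funext i; rw [hgeo i]
        _ = ENNReal.ofReal (∑' i : ℕ, a (m + 1) * (2⁻¹ : ℝ) ^ i) :=
            (ENNReal.ofReal_tsum_of_nonneg (fun i => by positivity) hsummable).symm
        _ = ENNReal.ofReal (2 * a (m + 1)) := by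
            rw [tsum_mul_left, tsum_geometric_of_lt_one (by norm_num) (by norm_num)]
            norm_num [mul_comm]
    have hbad : volume (Ioo 0 ε \ O) ≤ ENNReal.ofReal (δ' / 4 * (2 * ε)) := by
      calc volume (Ioo 0 ε \ O)
          ≤ volume (Set.range a ∪ (⋃ i : ℕ, Bk (m + i))) :=
            measure_mono (hcover ε hε0 hε1 m hm hmin)
        _ ≤ volume (Set.range a) + volume (⋃ i : ℕ, Bk (m + i)) := measure_union_le _ _
        _ = volume (⋃ i : ℕ, Bk (m + i)) := by
            rw [(Set.countable_range a).measure_zero volume, zero_add]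
        _ ≤ ∑' i : ℕ, volume (Bk (m + i)) := measure_iUnion_le _
        _ ≤ ∑' i : ℕ, ENNReal.ofReal (δ' / 4) * ENNReal.ofReal (a (m + i + 1)) := by
            apply ENNReal.tsum_le_tsum
            intro i
            obtain ⟨hfin, hsq⟩ := hK (m + i) (le_trans hmK (Nat.le_add_right _ _))
            exact le_trans (cheby (m + i) hfin.ne)
              (mul_le_mul_left (ENNReal.ofReal_le_ofReal hsq.le) _)
        _ = ENNReal.ofReal (δ' / 4) * ∑' i : ℕ, ENNReal.ofReal (a (m + i + 1)) :=
            ENNReal.tsum_mul_left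
        _ = ENNReal.ofReal (δ' / 4) * ENNReal.ofReal (2 * a (m + 1)) := by rw [hsum]
        _ ≤ ENNReal.ofReal (δ' / 4) * ENNReal.ofReal (2 * ε) := by
            exact mul_le_mul_right (ENNReal.ofReal_le_ofReal (by linarith)) _
        _ = ENNReal.ofReal (δ' / 4 * (2 * ε)) := by
            rw [← ENNReal.ofReal_mul (by linarith)]
    have hadd : volume (O ∩ Ioo 0 ε) + volume (Ioo 0 ε \ O) = ENNReal.ofReal ε := by
      rw [inter_comm, measure_inter_add_diff _ hOmeas, Real.volume_Ioo, sub_zero]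
    have hfin' : volume (O ∩ Ioo 0 ε) + volume (Ioo 0 ε \ O) ≠ ∞ := by
      rw [hadd]; exact ENNReal.ofReal_ne_top
    have hg := (ENNReal.add_ne_top.mp hfin').1
    have hb := (ENNReal.add_ne_top.mp hfin').2
    have hgb : (volume (O ∩ Ioo 0 ε)).toReal + (volume (Ioo 0 ε \ O)).toReal = ε := by
      rw [← ENNReal.toReal_add hg hb, hadd, ENNReal.toReal_ofReal hε0.le]
    have hbreal : (volume (Ioo 0 ε \ O)).toReal ≤ δ' / 4 * (2 * ε) :=
      ENNReal.toReal_le_of_le_ofReal (by positivity) hbad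
    have hb0 : 0 ≤ (volume (Ioo 0 ε \ O)).toReal := ENNReal.toReal_nonneg
    rw [Real.dist_eq]
    have heq : (volume (O ∩ Ioo 0 ε)).toReal / ε - 1 =
        -((volume (Ioo 0 ε \ O)).toReal / ε) := by
      field_simp
      linarith
    rw [heq, abs_neg, abs_of_nonneg (by positivity)]
    rw [div_lt_iff₀ hε0]
    nlinarith
  · -- φ tends to 0 along O
    intro d hd
    obtain ⟨K, hK⟩ := eventually_atTop.mp (hc_tendsto.eventually (gt_mem_nhds hd))
    refine ⟨a K, ha_pos K, ?_⟩
    intro r hr hrK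
    obtain ⟨k, hk⟩ := mem_iUnion.mp hr
    have hKk : K ≤ k := by
      by_contra h
      push_neg at h
      have : a K ≤ a (k + 1) := ha_anti.antitone h
      exact absurd (lt_trans hk.1.1 hrK) (not_lt.mpr this)
    exact lt_trans hk.2 (hK k hKk)
end
end
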